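/- (Type C_n, Weyl group computation.) For all integers r, j with 2 ≤ r ≤ n and r−1 ≤ j ≤ n−1, the linear map w_{r,j} satisfies w_{r,j}(ω_r) = ω_{r−2} + α_j. -/

import Mathlib

/-- The simple reflection `s_i` of type `C_n` acting on coordinate vectors
(coordinates indexed `1, …, n`): for `i < n` it swaps the `i`-th and `(i+1)`-th
coordinates, and `s_n` changes the sign of the `n`-th coordinate. -/
def refC (n : ℕ) (i : ℤ) (x : ℤ → ℝ) : ℤ → ℝ :=
  if i ≤ (n : ℤ) - 1 then
    fun t => if t = i then x (i + 1) else if t = i + 1 then x i else x t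
  else
    fun t => if t = (n : ℤ) then -x (n : ℤ) else x t

/-- The fundamental weight `ω_r = ε_1 + ⋯ + ε_r` (with `ω_0 = 0`). -/
def omegaW (r : ℤ) : ℤ → ℝ := fun t => if 1 ≤ t ∧ t ≤ r then 1 else 0

/-- The simple root `α_j` of type `C_n`: `α_j = ε_j - ε_{j+1}` for `j < n`
and `α_n = 2 ε_n`. -/
def alphaC (n : ℕ) (j : ℤ) : ℤ → ℝ := fun t =>
  if j ≤ (n : ℤ) - 1 then (if t = j then 1 else if t = j + 1 then -1 else 0)
  else (if t = (n : ℤ) then 2 else 0)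

/-- The list of indices of `w_{r,j} = s_{j-1} ⋯ s_{r-1} · s_{j+1} ⋯ s_{n-1} ·
s_n s_{n-1} ⋯ s_r` (rightmost factor applied first, so applied via `foldr`). -/
def wrjIdx (n : ℕ) (r j : ℤ) : List ℤ :=
  ((List.range (j + 1 - r).toNat).map fun t => j - 1 - (t : ℤ))
    ++ ((List.range ((n : ℤ) - 1 - j).toNat).map fun t => j + 1 + (t : ℤ))
    ++ ((List.range ((n : ℤ) + 1 - r).toNat).map fun t => (n : ℤ) - (t : ℤ))

/-- Normalize the coerced-list form appearing in `wrjIdx`. -/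
lemma listNorm (f : ℤ → ℤ) (m : ℕ) :
    List.map f ((List.range m).flatMap fun a => [(a : ℤ)])
      = (List.range m).map fun t : ℕ => f (t : ℤ) := by
  simp [← List.map_eq_flatMap, Function.comp_def]

/-- `1` on `1..r-1` and value `c` at position `m`. -/
def vecCB (r m : ℤ) (c : ℝ) : ℤ → ℝ :=
  fun t => if 1 ≤ t ∧ t ≤ r - 1 then 1 else if t = m then c else 0

/-- `1` on `1..r-2`, `1` at `m`, `-1` at `j+1`. -/
def vecA (r m j : ℤ) : ℤ → ℝ :=
  fun t => if 1 ≤ t ∧ t ≤ r - 2 then 1 else if t = m then 1 else if t = j + 1 then -1 else 0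

lemma foldC (n : ℕ) (r : ℤ) (hr : 2 ≤ r) (k : ℕ) (hk : (k : ℤ) ≤ (n : ℤ) - r) :
    ((List.range (k + 1)).map fun t : ℕ => (n : ℤ) - (t : ℤ)).foldr (refC n)
      (vecCB r ((n : ℤ) - (k : ℤ)) 1) = vecCB r (n : ℤ) (-1) := by
  induction k with
  | zero =>
    simp only [List.range_succ, List.range_zero, List.nil_append, List.map_cons, List.map_nil,
      List.foldr_cons, List.foldr_nil, Nat.cast_zero, sub_zero]
    have hi : ¬ ((n : ℤ) ≤ (n : ℤ) - 1) := by omega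
    funext t
    simp only [refC, vecCB, hi, if_false]
    split_ifs <;> first | rfl | (exfalso; omega) | norm_num
  | succ k ih =>
    rw [List.range_succ, List.map_append, List.foldr_append]
    simp only [List.map_cons, List.map_nil, List.foldr_cons, List.foldr_nil]
    have hstep : refC n ((n : ℤ) - ((k + 1 : ℕ) : ℤ)) (vecCB r ((n : ℤ) - ((k + 1 : ℕ) : ℤ)) 1)
        = vecCB r ((n : ℤ) - (k : ℤ)) 1 := by
      have hi : (n : ℤ) - ((k + 1 : ℕ) : ℤ) ≤ (n : ℤ) - 1 := by push_cast; omega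
      funext t
      simp only [refC, vecCB, hi, if_true]
      push_cast
      split_ifs <;> first | rfl | (exfalso; omega) | norm_num
    rw [hstep, ih (by omega)]

lemma foldB (n : ℕ) (r : ℤ) (hr : 2 ≤ r) (k : ℕ) (hk : (k : ℤ) ≤ (n : ℤ) - r) :
    ((List.range k).map fun t : ℕ => (n : ℤ) - (k : ℤ) + (t : ℤ)).foldr (refC n)
      (vecCB r (n : ℤ) (-1)) = vecCB r ((n : ℤ) - (k : ℤ)) (-1) := by
  induction k with
  | zero => simp
  | succ k ih =>
    rw [List.range_succ_eq_map, List.map_cons, List.map_map]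
    have hfn : ((fun t : ℕ => (n : ℤ) - ((k + 1 : ℕ) : ℤ) + (t : ℤ)) ∘ Nat.succ)
        = fun t : ℕ => (n : ℤ) - (k : ℤ) + (t : ℤ) := by
      funext t
      simp only [Function.comp]
      push_cast
      ring
    rw [hfn]
    simp only [List.foldr_cons, Nat.cast_zero, add_zero]
    rw [ih (by omega)]
    have hi : (n : ℤ) - ((k + 1 : ℕ) : ℤ) ≤ (n : ℤ) - 1 := by push_cast; omega
    funext t
    simp only [refC, vecCB, hi, if_true]
    push_cast
    split_ifs <;> first | rfl | (exfalso; omega) | norm_num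

lemma foldA (n : ℕ) (r j : ℤ) (hr : 2 ≤ r) (hj1 : r - 1 ≤ j) (hj2 : j ≤ (n : ℤ) - 1)
    (k : ℕ) (hk : (k : ℤ) ≤ j + 1 - r) :
    ((List.range k).map fun t : ℕ => r - 2 + (k : ℤ) - (t : ℤ)).foldr (refC n)
      (vecA r (r - 1) j) = vecA r (r - 1 + (k : ℤ)) j := by
  induction k with
  | zero => simp
  | succ k ih =>
    rw [List.range_succ_eq_map, List.map_cons, List.map_map]
    have hfn : ((fun t : ℕ => r - 2 + ((k + 1 : ℕ) : ℤ) - (t : ℤ)) ∘ Nat.succ)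
        = fun t : ℕ => r - 2 + (k : ℤ) - (t : ℤ) := by
      funext t
      simp only [Function.comp]
      push_cast
      ring
    rw [hfn]
    simp only [List.foldr_cons, Nat.cast_zero, sub_zero]
    rw [ih (by omega)]
    have hi : r - 2 + ((k + 1 : ℕ) : ℤ) ≤ (n : ℤ) - 1 := by push_cast; omega
    funext t
    simp only [refC, vecA, hi, if_true]
    push_cast
    split_ifs <;> first | rfl | (exfalso; omega) | norm_num

/-- type C_n: for `2 ≤ r ≤ n` and `r - 1 ≤ j ≤ n - 1`,
`w_{r,j}(ω_r) = ω_{r-2} + α_j`. -/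
theorem wrj_omega_C (n : ℕ) (hn : 2 ≤ n) (r j : ℤ) (hr : 2 ≤ r) (hrn : r ≤ (n : ℤ))
    (hj1 : r - 1 ≤ j) (hj2 : j ≤ (n : ℤ) - 1) :
    (wrjIdx n r j).foldr (refC n) (omegaW r) = omegaW (r - 2) + alphaC n j := by
  have hL : wrjIdx n r j
      = ((List.range (j + 1 - r).toNat).map fun t : ℕ => j - 1 - (t : ℤ))
        ++ ((List.range ((n : ℤ) - 1 - j).toNat).map fun t : ℕ => j + 1 + (t : ℤ))
        ++ ((List.range ((n : ℤ) + 1 - r).toNat).map fun t : ℕ => (n : ℤ) - (t : ℤ)) := by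
    simp [wrjIdx, listNorm, ← List.map_eq_flatMap, Function.comp_def]
  rw [hL, List.foldr_append, List.foldr_append]
  -- Part C
  have e1 : ((n : ℤ) + 1 - r).toNat = ((n : ℤ) - r).toNat + 1 := by omega
  have hbase : omegaW r = vecCB r ((n : ℤ) - ((((n : ℤ) - r).toNat : ℕ) : ℤ)) 1 := by
    funext t
    simp only [omegaW, vecCB]
    split_ifs <;> first | rfl | (exfalso; omega) | norm_num
  rw [e1, hbase, foldC n r hr (((n : ℤ) - r).toNat) (by omega)]
  -- Part B
  have hfB : (fun t : ℕ => j + 1 + (t : ℤ))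
      = fun t : ℕ => (n : ℤ) - ((((n : ℤ) - 1 - j).toNat : ℕ) : ℤ) + (t : ℤ) := by
    funext t; omega
  rw [hfB, foldB n r hr (((n : ℤ) - 1 - j).toNat) (by omega)]
  -- Part A
  have hmid : vecCB r ((n : ℤ) - ((((n : ℤ) - 1 - j).toNat : ℕ) : ℤ)) (-1)
      = vecA r (r - 1) j := by
    funext t
    simp only [vecCB, vecA]
    split_ifs <;> first | rfl | (exfalso; omega) | norm_num
  have hfA : (fun t : ℕ => j - 1 - (t : ℤ))
      = fun t : ℕ => r - 2 + (((j + 1 - r).toNat : ℕ) : ℤ) - (t : ℤ) := by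
    funext t; omega
  rw [hmid, hfA, foldA n r j hr hj1 hj2 ((j + 1 - r).toNat) (by omega)]
  funext t
  have hjn : j ≤ (n : ℤ) - 1 := hj2
  simp only [vecA, omegaW, alphaC, Pi.add_apply, hjn, if_true]
  split_ifs <;> first | rfl | (exfalso; omega) | norm_num
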